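/- For every n ≥ 2, the enhanced power graph P_E(Q_{4n}) of the generalized quaternion group Q_{4n} of order 4n is not minimally edge connected. -/

import Mathlib

/-- The degree of a vertex: the number of its neighbours. -/
noncomputable def gDeg {V : Type*} (G : SimpleGraph V) (v : V) : ℕ :=
  (G.neighborSet v).ncard

/-- The minimum degree of a graph. -/
noncomputable def minDeg {V : Type*} (G : SimpleGraph V) : ℕ :=
  sInf (Set.range (gDeg G))

/-- The edge connectivity: the minimum size of a set of edges whose removal
disconnects the graph. -/
noncomputable def edgeConn {V : Type*} (G : SimpleGraph V) : ℕ :=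
  sInf {n : ℕ | ∃ S : Set (Sym2 V), S ⊆ G.edgeSet ∧ S.ncard = n ∧
    ¬ (G.deleteEdges S).Connected}

/-- The vertex connectivity: the minimum size of a set of vertices whose removal
disconnects the graph or leaves a single vertex. -/
noncomputable def vertexConn {V : Type*} (G : SimpleGraph V) : ℕ :=
  sInf {n : ℕ | ∃ S : Set V, S.ncard = n ∧ Sᶜ.Nonempty ∧
    (¬ (G.induce Sᶜ).Preconnected ∨ Sᶜ.ncard = 1)}

/-- A graph is minimally edge connected if deleting any edge decreases the
edge connectivity by one. -/
def MinEdgeConnected {V : Type*} (G : SimpleGraph V) : Prop :=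
  ∀ e ∈ G.edgeSet, edgeConn (G.deleteEdges {e}) = edgeConn G - 1

/-- A graph is minimally connected if deleting any edge decreases the
vertex connectivity by one. -/
def MinConnected {V : Type*} (G : SimpleGraph V) : Prop :=
  ∀ e ∈ G.edgeSet, vertexConn (G.deleteEdges {e}) = vertexConn G - 1

/-- The power graph of a group: distinct `x, y` are adjacent iff one is a
natural power of the other. -/
def powerGraph (G : Type*) [Group G] : SimpleGraph G :=
  SimpleGraph.fromRel (fun x y => ∃ m : ℕ, y = x ^ m)

/-- The enhanced power graph of a group: distinct `x, y` are adjacent iff they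
lie in a common cyclic subgroup. -/
def enhancedPowerGraph (G : Type*) [Group G] : SimpleGraph G :=
  SimpleGraph.fromRel
    (fun x y => ∃ z : G, x ∈ Subgroup.zpowers z ∧ y ∈ Subgroup.zpowers z)

/-- The order superpower graph of a group: distinct `x, y` are adjacent iff the
order of one divides the order of the other. -/
def superpowerGraph (G : Type*) [Group G] : SimpleGraph G :=
  SimpleGraph.fromRel (fun x y => orderOf x ∣ orderOf y)

section QuatAux

open QuaternionGroup Subgroup

variable {n : ℕ}


open QuaternionGroup Subgroup

variable {n : ℕ}

lemma zmodcast_ne (hn : 2 ≤ n) {k l : ℕ} (hk : k < 2*n) (hl : l < 2*n) (hkl : k ≠ l) :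
    ((k : ZMod (2*n)) ≠ (l : ZMod (2*n))) := by
  haveI : NeZero (2*n) := ⟨by omega⟩
  intro h
  apply hkl
  have := congrArg ZMod.val h
  rwa [ZMod.val_cast_of_lt hk, ZMod.val_cast_of_lt hl] at this

lemma neg_n_eq : (-(n : ZMod (2*n)) = (n : ZMod (2*n))) := by
  have h : ((n : ZMod (2*n))) + n = 0 := by
    rw [← Nat.cast_add, show n + n = 2*n by ring, ZMod.natCast_self]
  exact neg_eq_of_add_eq_zero_left h

lemma a_one_zpow (k : ℤ) : (a 1 : QuaternionGroup n) ^ k = a (k : ZMod (2*n)) := by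
  cases k with
  | ofNat m =>
    rw [Int.ofNat_eq_coe, zpow_natCast, a_one_pow]
    congr 1
    push_cast
    rfl
  | negSucc m =>
    rw [zpow_negSucc, a_one_pow]
    have hinv : ∀ i : ZMod (2*n), (a i : QuaternionGroup n)⁻¹ = a (-i) := fun _ => rfl
    rw [hinv]
    congr 1
    push_cast [Int.negSucc_eq]
    ring

lemma mem_zpowers_a_one [NeZero n] (i : ZMod (2*n)) :
    a i ∈ zpowers (a 1 : QuaternionGroup n) := by
  haveI : NeZero (2*n) := ⟨by have := NeZero.ne n; omega⟩
  refine mem_zpowers_iff.mpr ⟨(i.val : ℤ), ?_⟩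
  rw [a_one_zpow]
  congr 1
  push_cast
  rw [ZMod.natCast_val, ZMod.cast_id]

lemma zpow_a_is_a [NeZero n] {j : ZMod (2*n)} {w : QuaternionGroup n}
    (h : w ∈ zpowers (a j : QuaternionGroup n)) : ∃ m, w = a m := by
  haveI : NeZero (2*n) := ⟨by have := NeZero.ne n; omega⟩
  obtain ⟨k, hk⟩ := mem_zpowers_iff.mp h
  have hj : (a j : QuaternionGroup n) = (a 1) ^ ((j.val : ℤ)) := by
    rw [a_one_zpow]
    congr 1
    push_cast
    rw [ZMod.natCast_val, ZMod.cast_id]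
  refine ⟨(((j.val : ℤ) * k : ℤ) : ZMod (2*n)), ?_⟩
  rw [← hk, hj, ← zpow_mul, a_one_zpow]

lemma xa_pow_three (i : ZMod (2*n)) : (xa i : QuaternionGroup n)^3 = xa (i + (n : ZMod (2*n))) := by
  rw [pow_succ, xa_sq, a_mul_xa]
  congr 1
  rw [sub_eq_add_neg, neg_n_eq]

lemma zpowers_xa_sub {j : ZMod (2*n)} {w : QuaternionGroup n}
    (h : w ∈ zpowers (xa j : QuaternionGroup n)) :
    w = 1 ∨ w = a n ∨ w = xa j ∨ w = xa (j + (n : ZMod (2*n))) := by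
  obtain ⟨k, hk⟩ := mem_zpowers_iff.mp h
  have h4 : (xa j : QuaternionGroup n) ^ (4:ℤ) = 1 := by
    rw [show ((4:ℤ) = ((4:ℕ):ℤ)) from rfl, zpow_natCast, xa_pow_four]
  have hred : (xa j : QuaternionGroup n) ^ k = (xa j) ^ (k % 4) := by
    conv_lhs => rw [← Int.mul_ediv_add_emod k 4]
    rw [zpow_add, zpow_mul, h4, one_zpow, one_mul]
  rw [hred] at hk
  have h0 : 0 ≤ k % 4 := Int.emod_nonneg k (by norm_num)
  have h1 : k % 4 < 4 := Int.emod_lt_of_pos k (by norm_num)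
  set r := k % 4 with hr
  clear_value r
  interval_cases r
  · rw [zpow_zero] at hk; exact Or.inl hk.symm
  · rw [zpow_one] at hk; exact Or.inr (Or.inr (Or.inl hk.symm))
  · rw [show ((2:ℤ) = ((2:ℕ):ℤ)) from rfl, zpow_natCast, xa_sq] at hk
    exact Or.inr (Or.inl hk.symm)
  · rw [show ((3:ℤ) = ((3:ℕ):ℤ)) from rfl, zpow_natCast, xa_pow_three] at hk
    exact Or.inr (Or.inr (Or.inr hk.symm))

section Graph

lemma epg_adj {Γ : Type*} [Group Γ] {x y : Γ} :
    (enhancedPowerGraph Γ).Adj x y ↔ x ≠ y ∧ ∃ z, x ∈ zpowers z ∧ y ∈ zpowers z := by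
  rw [enhancedPowerGraph, SimpleGraph.fromRel_adj]
  refine and_congr_right fun _ => ⟨?_, Or.inl⟩
  rintro (h | ⟨z, h1, h2⟩)
  · exact h
  · exact ⟨z, h2, h1⟩

lemma adj_one {Γ : Type*} [Group Γ] {x : Γ} (h : x ≠ 1) : (enhancedPowerGraph Γ).Adj 1 x :=
  epg_adj.mpr ⟨Ne.symm h, ⟨x, Subgroup.one_mem _, Subgroup.mem_zpowers x⟩⟩

lemma adj_hub [NeZero n] {x : QuaternionGroup n} (h : x ≠ a (n : ZMod (2*n))) :
    (enhancedPowerGraph (QuaternionGroup n)).Adj x (a (n : ZMod (2*n))) := by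
  refine epg_adj.mpr ⟨h, ?_⟩
  cases x with
  | a i => exact ⟨a 1, mem_zpowers_a_one i, mem_zpowers_a_one _⟩
  | xa i =>
    exact ⟨xa i, Subgroup.mem_zpowers _,
      mem_zpowers_iff.mpr ⟨2, by rw [show ((2:ℤ) = ((2:ℕ):ℤ)) from rfl, zpow_natCast, xa_sq]⟩⟩

lemma adj_xa0 [NeZero n] {w : QuaternionGroup n}
    (h : (enhancedPowerGraph (QuaternionGroup n)).Adj (xa 0) w) :
    w = 1 ∨ w = a (n : ZMod (2*n)) ∨ w = xa (n : ZMod (2*n)) := by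
  obtain ⟨hne, z, hx, hw⟩ := epg_adj.mp h
  cases z with
  | a j =>
    obtain ⟨m, hm⟩ := zpow_a_is_a hx
    exact absurd hm (by simp)
  | xa j =>
    have hnn : ((n : ZMod (2*n)) + n) = 0 := by
      rw [← Nat.cast_add, show n + n = 2*n by ring, ZMod.natCast_self]
    rcases zpowers_xa_sub hx with h1 | h1 | h1 | h1
    · exact absurd h1 (by simp [QuaternionGroup.one_def, -QuaternionGroup.a_zero])
    · exact absurd h1 (by simp)
    · injection h1 with hj
      subst hj
      rcases zpowers_xa_sub hw with h2 | h2 | h2 | h2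
      · exact Or.inl h2
      · exact Or.inr (Or.inl h2)
      · exact absurd h2.symm hne
      · rw [zero_add] at h2; exact Or.inr (Or.inr h2)
    · injection h1 with hj
      have hj' : j = (n : ZMod (2*n)) := by
        have h2 : j = -(n : ZMod (2*n)) := eq_neg_of_add_eq_zero_left hj.symm
        rwa [neg_n_eq] at h2
      subst hj'
      rcases zpowers_xa_sub hw with h2 | h2 | h2 | h2
      · exact Or.inl h2
      · exact Or.inr (Or.inl h2)
      · exact Or.inr (Or.inr h2)
      · rw [hnn] at h2; exact absurd h2.symm hne

end Graph

lemma one_ne_hub (hn : 2 ≤ n) : (1 : QuaternionGroup n) ≠ a (n : ZMod (2*n)) := by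
  rw [QuaternionGroup.one_def]
  intro h
  injection h with h'
  exact zmodcast_ne (n := n) hn (k := 0) (l := n) (by omega) (by omega) (by omega)
    (by simpa using h')

lemma third_nbr (hn : 2 ≤ n) {u : QuaternionGroup n} (hu1 : u ≠ 1)
    (huh : u ≠ a (n : ZMod (2*n))) :
    ∃ t, (enhancedPowerGraph (QuaternionGroup n)).Adj u t ∧ t ≠ 1 ∧
      t ≠ a (n : ZMod (2*n)) ∧ t ≠ u := by
  haveI : NeZero n := ⟨by omega⟩
  haveI : NeZero (2*n) := ⟨by omega⟩
  have hn0 : ((n : ZMod (2*n))) ≠ 0 :=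
    fun h => zmodcast_ne (n := n) hn (k := n) (l := 0) (by omega) (by omega) (by omega)
      (by simpa using h)
  cases u with
  | xa i =>
    refine ⟨xa (i + (n : ZMod (2*n))), ?_, by simp [QuaternionGroup.one_def, -QuaternionGroup.a_zero], by simp, ?_⟩
    · refine epg_adj.mpr ⟨?_, xa i, Subgroup.mem_zpowers _, mem_zpowers_iff.mpr ⟨3, ?_⟩⟩
      · simp only [ne_eq, xa.injEq]
        intro hik
        exact hn0 (left_eq_add.mp hik)
      · rw [show ((3:ℤ) = ((3:ℕ):ℤ)) from rfl, zpow_natCast, xa_pow_three]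
    · simp only [ne_eq, xa.injEq]
      intro hik
      exact hn0 (left_eq_add.mp hik.symm)
  | a i =>
    have hival : ((i.val : ℕ) : ZMod (2*n)) = i := by rw [ZMod.natCast_val, ZMod.cast_id]
    have hi0 : i ≠ 0 := by
      intro h; exact hu1 (by rw [h, QuaternionGroup.one_def])
    have hin : i ≠ (n : ZMod (2*n)) := fun h => huh (by rw [h])
    have hvlt : i.val < 2*n := ZMod.val_lt i
    have hvn : i.val ≠ n := by
      intro h; exact hin (by rw [← hival, h])
    have hv0 : i.val ≠ 0 := by
      intro h; exact hi0 (by rw [← hival, h, Nat.cast_zero])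
    obtain ⟨j₀, hj₀lt, hj₀i, hj₀n, hj₀0⟩ :
        ∃ j₀ : ℕ, j₀ < 2*n ∧ j₀ ≠ i.val ∧ j₀ ≠ n ∧ j₀ ≠ 0 := by
      by_cases h1 : 1 = i.val ∨ 1 = n
      · by_cases h2 : 2 = i.val ∨ 2 = n
        · exact ⟨3, by omega, by omega, by omega, by omega⟩
        · exact ⟨2, by omega, by omega, by omega, by omega⟩
      · exact ⟨1, by omega, by omega, by omega, by omega⟩
    have hji : (j₀ : ZMod (2*n)) ≠ i := by
      intro h
      have := congrArg ZMod.val h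
      rw [ZMod.val_cast_of_lt hj₀lt] at this
      exact hj₀i this
    refine ⟨a (j₀ : ZMod (2*n)), ?_, ?_, ?_, ?_⟩
    · exact epg_adj.mpr ⟨by simp [a.injEq]; exact fun h => hji h.symm,
        a 1, mem_zpowers_a_one _, mem_zpowers_a_one _⟩
    · rw [QuaternionGroup.one_def]
      simp only [ne_eq, a.injEq]
      exact fun h => zmodcast_ne (n := n) hn (k := j₀) (l := 0) hj₀lt (by omega) hj₀0
        (by simpa using h)
    · simp only [ne_eq, a.injEq]
      exact zmodcast_ne (n := n) hn hj₀lt (by omega) hj₀n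
    · simp only [ne_eq, a.injEq]
      exact hji

lemma exists_good (hn : 2 ≤ n) (T : Set (Sym2 (QuaternionGroup n))) (hfin : T.Finite)
    (hcard : T.ncard ≤ 3) (hε : s((1 : QuaternionGroup n), a (n : ZMod (2*n))) ∈ T) :
    ∃ w : QuaternionGroup n, w ≠ 1 ∧ w ≠ a (n : ZMod (2*n)) ∧
      s(w, (1 : QuaternionGroup n)) ∉ T ∧ s(w, a (n : ZMod (2*n))) ∉ T := by
  classical
  haveI : NeZero n := ⟨by omega⟩
  haveI : NeZero (2*n) := ⟨by omega⟩
  set hub : QuaternionGroup n := a (n : ZMod (2*n)) with hhub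
  by_contra hcon
  push_neg at hcon
  set W : Fin 5 → QuaternionGroup n :=
    ![xa ((0:ℕ) : ZMod (2*n)), xa ((1:ℕ) : ZMod (2*n)), xa ((2:ℕ) : ZMod (2*n)),
      xa ((3:ℕ) : ZMod (2*n)), a ((1:ℕ) : ZMod (2*n))] with hW
  have h01 := zmodcast_ne (n := n) hn (k := 0) (l := 1) (by omega) (by omega) (by omega)
  have h02 := zmodcast_ne (n := n) hn (k := 0) (l := 2) (by omega) (by omega) (by omega)
  have h03 := zmodcast_ne (n := n) hn (k := 0) (l := 3) (by omega) (by omega) (by omega)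
  have h12 := zmodcast_ne (n := n) hn (k := 1) (l := 2) (by omega) (by omega) (by omega)
  have h13 := zmodcast_ne (n := n) hn (k := 1) (l := 3) (by omega) (by omega) (by omega)
  have h23 := zmodcast_ne (n := n) hn (k := 2) (l := 3) (by omega) (by omega) (by omega)
  have h10 := zmodcast_ne (n := n) hn (k := 1) (l := 0) (by omega) (by omega) (by omega)
  have h1n := zmodcast_ne (n := n) hn (k := 1) (l := n) (by omega) (by omega) (by omega)
  have hW1 : ∀ i, W i ≠ 1 := by
    intro i
    fin_cases i <;> simp [hW, QuaternionGroup.one_def, -QuaternionGroup.a_zero, a.injEq]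
    simpa using h10
  have hWh : ∀ i, W i ≠ hub := by
    intro i
    fin_cases i <;> simp [hW, hhub, a.injEq]
    simpa using h1n
  have hWinj : Function.Injective W := by
    intro i j hij
    fin_cases i <;> fin_cases j <;> first | rfl | simp_all [hW]
  have h1hub : (1 : QuaternionGroup n) ≠ hub := one_ne_hub hn
  set f : Fin 5 → Sym2 (QuaternionGroup n) :=
    fun i => if s(W i, (1 : QuaternionGroup n)) ∈ T then s(W i, (1 : QuaternionGroup n))
      else s(W i, hub) with hf
  have hfT : ∀ i, f i ∈ T := by
    intro i
    by_cases h : s(W i, (1 : QuaternionGroup n)) ∈ T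
    · simpa [hf, h] using h
    · simpa [hf, h] using hcon (W i) (hW1 i) (hWh i) h
  have hfε : ∀ i, f i ≠ s((1 : QuaternionGroup n), hub) := by
    intro i
    by_cases h : s(W i, (1 : QuaternionGroup n)) ∈ T <;> simp only [hf, h, if_true, if_false]
    · intro hcontra
      rcases Sym2.eq_iff.mp hcontra with ⟨hA, hB⟩ | ⟨hA, hB⟩
      · exact hW1 i hA
      · exact hWh i hA
    · intro hcontra
      rcases Sym2.eq_iff.mp hcontra with ⟨hA, hB⟩ | ⟨hA, hB⟩
      · exact hW1 i hA
      · exact h1hub hB.symm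
  have hfinj : Function.Injective f := by
    intro i j hij
    apply hWinj
    by_cases c1 : s(W i, (1 : QuaternionGroup n)) ∈ T <;>
      by_cases c2 : s(W j, (1 : QuaternionGroup n)) ∈ T <;>
        simp only [hf, c1, c2, if_true, if_false] at hij <;>
          rcases Sym2.eq_iff.mp hij with ⟨hA, hB⟩ | ⟨hA, hB⟩
    · exact hA
    · exact absurd hA (hW1 i)
    · exact absurd hB h1hub
    · exact absurd hA (hWh i)
    · exact absurd hB.symm h1hub
    · exact absurd hA (hW1 i)
    · exact hA
    · exact absurd hA (hWh i)
  have h5 : (Set.range f).ncard = 5 := by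
    rw [← Set.image_univ, Set.ncard_image_of_injective _ hfinj, Set.ncard_univ,
      Nat.card_eq_fintype_card, Fintype.card_fin]
  have hsub : Set.range f ⊆ T \ {s((1 : QuaternionGroup n), hub)} := by
    rintro x ⟨i, rfl⟩
    exact ⟨hfT i, by simpa using hfε i⟩
  have hins : insert (s((1 : QuaternionGroup n), hub)) (T \ {s((1 : QuaternionGroup n), hub)})
      = T := by
    rw [Set.insert_diff_singleton]
    exact Set.insert_eq_self.mpr hε
  have hd : T.ncard = (T \ {s((1 : QuaternionGroup n), hub)}).ncard + 1 := by
    conv_lhs => rw [← hins]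
    exact Set.ncard_insert_of_notMem (fun h => h.2 rfl) hfin.diff
  have hle := Set.ncard_le_ncard hsub hfin.diff
  omega

lemma no_reach {V : Type*} {H : SimpleGraph V} {u v : V} (hne : u ≠ v)
    (hiso : ∀ w, ¬ H.Adj u w) : ¬ H.Reachable u v := by
  intro h
  obtain ⟨p⟩ := h
  cases p with
  | nil => exact hne rfl
  | cons h' p' => exact hiso _ h'

lemma key (hn : 2 ≤ n) (T : Set (Sym2 (QuaternionGroup n))) (hfin : T.Finite)
    (hcard : T.ncard ≤ 3) (hε : s((1 : QuaternionGroup n), a (n : ZMod (2*n))) ∈ T) :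
    ((enhancedPowerGraph (QuaternionGroup n)).deleteEdges T).Connected := by
  classical
  haveI : NeZero n := ⟨by omega⟩
  haveI : NeZero (2*n) := ⟨by omega⟩
  set hub : QuaternionGroup n := a (n : ZMod (2*n)) with hhub
  set G := enhancedPowerGraph (QuaternionGroup n) with hG
  set H := G.deleteEdges T with hH
  have h1hub : (1 : QuaternionGroup n) ≠ hub := one_ne_hub hn
  have hAdj : ∀ x y : QuaternionGroup n, G.Adj x y → s(x, y) ∉ T → H.Adj x y :=
    fun x y h1 h2 => SimpleGraph.deleteEdges_adj.mpr ⟨h1, h2⟩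
  obtain ⟨w, hw1, hwh, hwT1, hwTh⟩ := exists_good hn T hfin hcard hε
  have hadj_1w : H.Adj 1 w := hAdj _ _ (adj_one hw1) (by rw [Sym2.eq_swap]; exact hwT1)
  have hadj_whub : H.Adj w hub := hAdj _ _ (adj_hub hwh) hwTh
  have hreach_hub : H.Reachable 1 hub := (hadj_1w.reachable).trans hadj_whub.reachable
  rw [SimpleGraph.connected_iff_exists_forall_reachable]
  refine ⟨1, fun u => ?_⟩
  by_cases hu1 : u = 1
  · rw [hu1]
  by_cases huh : u = hub
  · rw [huh]; exact hreach_hub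
  replace hu1 : u ≠ 1 := hu1
  replace huh : u ≠ hub := huh
  by_cases e1 : s((1 : QuaternionGroup n), u) ∈ T
  · by_cases e2 : s(u, hub) ∈ T
    · have hd1 : s((1 : QuaternionGroup n), hub) ≠ s((1 : QuaternionGroup n), u) := by
        intro h
        rcases Sym2.eq_iff.mp h with ⟨hA, hB⟩ | ⟨hA, hB⟩
        · exact huh hB.symm
        · exact h1hub hB.symm
      have hd2 : s((1 : QuaternionGroup n), hub) ≠ s(u, hub) := by
        intro h
        rcases Sym2.eq_iff.mp h with ⟨hA, hB⟩ | ⟨hA, hB⟩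
        · exact hu1 hA.symm
        · exact h1hub hA
      have hd3 : s((1 : QuaternionGroup n), u) ≠ s(u, hub) := by
        intro h
        rcases Sym2.eq_iff.mp h with ⟨hA, hB⟩ | ⟨hA, hB⟩
        · exact hu1 hA.symm
        · exact h1hub hA
      have hTeq : ({s((1 : QuaternionGroup n), hub), s((1 : QuaternionGroup n), u),
          s(u, hub)} : Set (Sym2 (QuaternionGroup n))) = T := by
        apply Set.eq_of_subset_of_ncard_le
        · intro x hx
          simp only [Set.mem_insert_iff, Set.mem_singleton_iff] at hx
          rcases hx with rfl | rfl | rfl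
          exacts [hε, e1, e2]
        · rw [Set.ncard_eq_three.mpr ⟨_, _, _, hd1, hd2, hd3, rfl⟩]
          exact hcard
        · exact hfin
      obtain ⟨t, htadj, ht1, hth, htu⟩ := third_nbr hn hu1 huh
      have h1t : H.Adj 1 t := by
        refine hAdj _ _ (adj_one ht1) ?_
        rw [← hTeq]
        intro h
        simp only [Set.mem_insert_iff, Set.mem_singleton_iff] at h
        rcases h with h | h | h
        · rcases Sym2.eq_iff.mp h with ⟨hA, hB⟩ | ⟨hA, hB⟩
          · exact hth hB
          · exact h1hub hA
        · rcases Sym2.eq_iff.mp h with ⟨hA, hB⟩ | ⟨hA, hB⟩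
          · exact htu hB
          · exact hu1 hA.symm
        · rcases Sym2.eq_iff.mp h with ⟨hA, hB⟩ | ⟨hA, hB⟩
          · exact hu1 hA.symm
          · exact h1hub hA
      have htu' : H.Adj t u := by
        refine hAdj _ _ htadj.symm ?_
        rw [← hTeq]
        intro h
        simp only [Set.mem_insert_iff, Set.mem_singleton_iff] at h
        rcases h with h | h | h
        · rcases Sym2.eq_iff.mp h with ⟨hA, hB⟩ | ⟨hA, hB⟩
          · exact ht1 hA
          · exact hth hA
        · rcases Sym2.eq_iff.mp h with ⟨hA, hB⟩ | ⟨hA, hB⟩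
          · exact ht1 hA
          · exact htu hA
        · rcases Sym2.eq_iff.mp h with ⟨hA, hB⟩ | ⟨hA, hB⟩
          · exact htu hA
          · exact hth hA
      exact (h1t.reachable).trans htu'.reachable
    · have hhu : H.Adj hub u :=
        hAdj _ _ (adj_hub huh).symm (by rw [Sym2.eq_swap]; exact e2)
      exact hreach_hub.trans hhu.reachable
  · exact (hAdj _ _ (adj_one hu1) e1).reachable

/-- For `n ≥ 2`, the enhanced power graph of the generalized
quaternion group of order `4n` is not minimally edge connected. -/
theorem stmt_5 (n : ℕ) (hn : 2 ≤ n) :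
    ¬ MinEdgeConnected (enhancedPowerGraph (QuaternionGroup n)) := by
  classical
  haveI : NeZero n := ⟨by omega⟩
  haveI : NeZero (2*n) := ⟨by omega⟩
  intro hMin
  set hub : QuaternionGroup n := a (n : ZMod (2*n)) with hhub
  set G := enhancedPowerGraph (QuaternionGroup n) with hG
  set ε : Sym2 (QuaternionGroup n) := s((1 : QuaternionGroup n), hub) with hεdef
  have h1hub : (1 : QuaternionGroup n) ≠ hub := one_ne_hub hn
  have hεedge : ε ∈ G.edgeSet := (SimpleGraph.mem_edgeSet _).mpr (adj_one h1hub.symm)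
  have hMinε := hMin ε hεedge
  -- the cut isolating xa 0
  have hn0 : ((n : ZMod (2*n))) ≠ 0 :=
    fun h => zmodcast_ne (n := n) hn (k := n) (l := 0) (by omega) (by omega) (by omega)
      (by simpa using h)
  have hx01 : (xa 0 : QuaternionGroup n) ≠ 1 := by simp [QuaternionGroup.one_def, -QuaternionGroup.a_zero]
  have hx0hub : (xa 0 : QuaternionGroup n) ≠ hub := by simp [hhub]
  have hx0xn : (xa 0 : QuaternionGroup n) ≠ xa (n : ZMod (2*n)) := by
    simp only [ne_eq, xa.injEq]
    exact fun h => hn0 h.symm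
  have hadj1 : G.Adj (xa 0) 1 := (adj_one hx01).symm
  have hadjhub : G.Adj (xa 0) hub := adj_hub hx0hub
  have hadjxn : G.Adj (xa 0) (xa (n : ZMod (2*n))) := by
    refine epg_adj.mpr ⟨hx0xn, xa 0, Subgroup.mem_zpowers _, mem_zpowers_iff.mpr ⟨3, ?_⟩⟩
    rw [show ((3:ℤ) = ((3:ℕ):ℤ)) from rfl, zpow_natCast, xa_pow_three, zero_add]
  set S₀ : Set (Sym2 (QuaternionGroup n)) :=
    {s(xa 0, (1 : QuaternionGroup n)), s(xa 0, hub), s(xa 0, xa (n : ZMod (2*n)))} with hS₀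
  have hS₀sub : S₀ ⊆ G.edgeSet := by
    intro x hx
    simp only [hS₀, Set.mem_insert_iff, Set.mem_singleton_iff] at hx
    rcases hx with rfl | rfl | rfl
    exacts [(SimpleGraph.mem_edgeSet _).mpr hadj1, (SimpleGraph.mem_edgeSet _).mpr hadjhub,
      (SimpleGraph.mem_edgeSet _).mpr hadjxn]
  have hd1 : s(xa 0, (1 : QuaternionGroup n)) ≠ s(xa 0, hub) := by
    intro h
    rcases Sym2.eq_iff.mp h with ⟨hA, hB⟩ | ⟨hA, hB⟩
    · exact h1hub hB
    · exact hx0hub hA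
  have hd2 : s(xa 0, (1 : QuaternionGroup n)) ≠ s(xa 0, xa (n : ZMod (2*n))) := by
    intro h
    rcases Sym2.eq_iff.mp h with ⟨hA, hB⟩ | ⟨hA, hB⟩
    · exact absurd hB (by simp [QuaternionGroup.one_def, -QuaternionGroup.a_zero])
    · exact hx0xn hA
  have hd3 : s(xa 0, hub) ≠ s(xa 0, xa (n : ZMod (2*n))) := by
    intro h
    rcases Sym2.eq_iff.mp h with ⟨hA, hB⟩ | ⟨hA, hB⟩
    · exact absurd hB (by simp [hhub])
    · exact hx0xn hA
  have hS₀card : S₀.ncard = 3 := Set.ncard_eq_three.mpr ⟨_, _, _, hd1, hd2, hd3, rfl⟩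
  have hS₀disc : ¬ (G.deleteEdges S₀).Connected := by
    intro hcon
    refine no_reach hx01 ?_ (hcon.preconnected (xa 0) 1)
    intro w hadj
    rw [SimpleGraph.deleteEdges_adj] at hadj
    obtain ⟨hadjG, hnotin⟩ := hadj
    apply hnotin
    rcases adj_xa0 hadjG with rfl | rfl | rfl
    · exact Set.mem_insert _ _
    · exact Set.mem_insert_of_mem _ (Set.mem_insert _ _)
    · exact Set.mem_insert_of_mem _ (Set.mem_insert_of_mem _ rfl)
  have hup : edgeConn G ≤ 3 := Nat.sInf_le ⟨S₀, hS₀sub, hS₀card, hS₀disc⟩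
  set Gε := G.deleteEdges {ε} with hGε
  have hset_ne : {m : ℕ | ∃ S : Set (Sym2 (QuaternionGroup n)), S ⊆ Gε.edgeSet ∧
      S.ncard = m ∧ ¬ (Gε.deleteEdges S).Connected}.Nonempty := by
    refine ⟨_, Gε.edgeSet, subset_rfl, rfl, ?_⟩
    intro hcon
    refine no_reach hx01 ?_ (hcon.preconnected (xa 0) 1)
    intro w hadj
    rw [SimpleGraph.deleteEdges_adj] at hadj
    exact hadj.2 ((SimpleGraph.mem_edgeSet _).mpr hadj.1)
  obtain ⟨S, hSsub, hScard, hSdisc⟩ := Nat.sInf_mem hset_ne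
  have hSfin : S.Finite := Set.Finite.subset (Set.toFinite _) hSsub
  have hS2 : S.ncard ≤ 2 := by
    rw [hScard]
    show edgeConn Gε ≤ 2
    rw [hMinε]
    omega
  have hkey := key hn ({ε} ∪ S) ((Set.finite_singleton ε).union hSfin)
    (by
      rw [Set.singleton_union]
      calc (insert ε S).ncard ≤ S.ncard + 1 := Set.ncard_insert_le _ _
      _ ≤ 3 := by omega)
    (Set.mem_union_left _ rfl)
  rw [← SimpleGraph.deleteEdges_deleteEdges] at hkey
  exact hSdisc hkey

end QuatAux
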